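/- Let A₁ = (a₁ b₁; c₁ d₁) and A₂ = (a₂ b₂; c₂ d₂) be real 2×2 matrices with det A₁ = det A₂ = 1 and b₁, b₂ ≠ 0, let f ∈ L¹(ℝ²,ℍ), and define h(x₁,x₂) := e^{i a₁ x₁²/(2b₁)} f(x₁,x₂) e^{j a₂ x₂²/(2b₂)}. Then for all (ω₁,ω₂) ∈ ℝ², (ℒ_s f)(ω₁,ω₂) = (1/√(i b₁)) e^{i d₁ ω₁²/(2b₁)} (ℱ_s h)(ω₁/b₁, ω₂/b₂) e^{j d₂ ω₂²/(2b₂)} (1/√(j b₂)), where for a unit pure imaginary quaternion u and b ≠ 0 one sets √(ub) := √|b| · e^{uπ·sgn(b)/4}. -/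

import Mathlib

open MeasureTheory Real ENNReal

noncomputable section

/-- The real quaternions. -/
abbrev Hq := Quaternion ℝ

/-- The imaginary unit `i`. -/
def qi : Hq := ⟨0,1,0,0⟩
/-- The imaginary unit `j`. -/
def qj : Hq := ⟨0,0,1,0⟩
/-- The imaginary unit `k`. -/
def qk : Hq := ⟨0,0,0,1⟩

/-- For a (unit pure imaginary) quaternion `u`, `e^{uθ} := cos θ + u sin θ`. -/
def qexp (u : Hq) (θ : ℝ) : Hq := (Real.cos θ) • (1 : Hq) + (Real.sin θ) • u

/-- The right-sided quaternion Fourier transform of `f ∈ L¹(ℝ²,ℍ)`. -/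
def Fr (f : ℝ × ℝ → Hq) (ω : ℝ × ℝ) : Hq :=
  (1 / (2 * Real.pi)) • ∫ x : ℝ × ℝ, f x * qexp qi (-(ω.1 * x.1)) * qexp qj (-(ω.2 * x.2))

/-- The two-sided quaternion Fourier transform of `f ∈ L¹(ℝ²,ℍ)`. -/
def Fs (f : ℝ × ℝ → Hq) (ω : ℝ × ℝ) : Hq :=
  (1 / (2 * Real.pi)) • ∫ x : ℝ × ℝ, qexp qi (-(ω.1 * x.1)) * f x * qexp qj (-(ω.2 * x.2))


/-- The LCT kernel K_A^u for a matrix A = (a b; c d) with b ≠ 0, evaluated at (x, ω). -/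
def Kker (u : Hq) (a b d : ℝ) (x ω : ℝ) : Hq :=
  (Real.sqrt (2 * Real.pi * |b|))⁻¹ •
    (qexp u (-(Real.pi * Real.sign b / 4)) *
      qexp u (a * x ^ 2 / (2 * b) - x * ω / b + d * ω ^ 2 / (2 * b)))

/-- The two-sided quaternion linear canonical transform (case b₁, b₂ ≠ 0). -/
def Ls (a1 b1 d1 a2 b2 d2 : ℝ) (f : ℝ × ℝ → Hq) (ω : ℝ × ℝ) : Hq :=
  ∫ x : ℝ × ℝ, Kker qi a1 b1 d1 x.1 ω.1 * f x * Kker qj a2 b2 d2 x.2 ω.2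

/-- The right-sided quaternion linear canonical transform (case b₁, b₂ ≠ 0). -/
def Lr (a1 b1 d1 a2 b2 d2 : ℝ) (f : ℝ × ℝ → Hq) (ω : ℝ × ℝ) : Hq :=
  ∫ x : ℝ × ℝ, f x * Kker qi a1 b1 d1 x.1 ω.1 * Kker qj a2 b2 d2 x.2 ω.2

/-- The quaternion square root of u·b: sqrt |b| · e^(u π sign b / 4). -/
def sqrtQ (u : Hq) (b : ℝ) : Hq := Real.sqrt |b| • qexp u (Real.pi * Real.sign b / 4)


lemma qi_sq : qi * qi = -1 := by
  ext <;> simp only [Quaternion.re_neg, Quaternion.imI_neg, Quaternion.imJ_neg, Quaternion.imK_neg, Quaternion.re_mul, Quaternion.imI_mul, Quaternion.imJ_mul, Quaternion.imK_mul, Quaternion.re_one, Quaternion.imI_one, Quaternion.imJ_one, Quaternion.imK_one] <;> simp [qi, Quaternion.ext_iff]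

lemma qj_sq : qj * qj = -1 := by
  ext <;> simp only [Quaternion.re_neg, Quaternion.imI_neg, Quaternion.imJ_neg, Quaternion.imK_neg, Quaternion.re_mul, Quaternion.imI_mul, Quaternion.imJ_mul, Quaternion.imK_mul, Quaternion.re_one, Quaternion.imI_one, Quaternion.imJ_one, Quaternion.imK_one] <;> simp [qj, Quaternion.ext_iff]

lemma qexp_mul (u : Hq) (hu : u * u = -1) (α β : ℝ) :
    qexp u α * qexp u β = qexp u (α + β) := by
  simp only [qexp, add_mul, mul_add, smul_mul_smul_comm, mul_one, one_mul, hu,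
    Real.cos_add, Real.sin_add, smul_neg, smul_one_mul, one_mul]
  module

lemma qexp_zero (u : Hq) : qexp u 0 = 1 := by simp [qexp]

lemma norm_qexp_qi (θ : ℝ) : ‖qexp qi θ‖ = 1 := by
  have h : ‖qexp qi θ‖ * ‖qexp qi θ‖ = 1 := by
    rw [← Quaternion.normSq_eq_norm_mul_self]
    simp only [qexp, Quaternion.normSq_def', Quaternion.re_smul, Quaternion.re_one, Quaternion.imI_one, Quaternion.imJ_one, Quaternion.imK_one, Quaternion.re_add, Quaternion.imI_add, Quaternion.imJ_add, Quaternion.imK_add, Quaternion.imI_smul, Quaternion.imJ_smul, Quaternion.imK_smul]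
    simp [qi]
  rcases mul_self_eq_one_iff.mp h with h1 | h1
  · exact h1
  · nlinarith [norm_nonneg (qexp qi θ)]

lemma norm_qexp_qj (θ : ℝ) : ‖qexp qj θ‖ = 1 := by
  have h : ‖qexp qj θ‖ * ‖qexp qj θ‖ = 1 := by
    rw [← Quaternion.normSq_eq_norm_mul_self]
    simp only [qexp, Quaternion.normSq_def', Quaternion.re_smul, Quaternion.re_one, Quaternion.imI_one, Quaternion.imJ_one, Quaternion.imK_one, Quaternion.re_add, Quaternion.imI_add, Quaternion.imJ_add, Quaternion.imK_add, Quaternion.imI_smul, Quaternion.imJ_smul, Quaternion.imK_smul]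
    simp [qj]
  rcases mul_self_eq_one_iff.mp h with h1 | h1
  · exact h1
  · nlinarith [norm_nonneg (qexp qj θ)]

lemma continuous_qexp (u : Hq) : Continuous (qexp u) := by
  unfold qexp; fun_prop

lemma integral_qmul_left (c : Hq) {g : ℝ × ℝ → Hq} (hg : Integrable g) :
    ∫ x : ℝ × ℝ, c * g x = c * ∫ x : ℝ × ℝ, g x :=
  by simpa using (ContinuousLinearMap.mul ℝ Hq c).integral_comp_comm hg

lemma integral_qmul_right (c : Hq) {g : ℝ × ℝ → Hq} (hg : Integrable g) :
    ∫ x : ℝ × ℝ, g x * c = (∫ x : ℝ × ℝ, g x) * c :=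
  by simpa using ((ContinuousLinearMap.mul ℝ Hq).flip c).integral_comp_comm hg

lemma integrable_sandwich {f : ℝ × ℝ → Hq} (hf : Integrable f)
    {θ1 θ2 : ℝ × ℝ → ℝ} (h1 : Continuous θ1) (h2 : Continuous θ2) :
    Integrable (fun x => qexp qi (θ1 x) * f x * qexp qj (θ2 x)) := by
  refine Integrable.mono' hf.norm ?_ ?_
  · exact ((((continuous_qexp qi).comp h1).aestronglyMeasurable).mul
      hf.aestronglyMeasurable).mul (((continuous_qexp qj).comp h2).aestronglyMeasurable)
  · filter_upwards with x
    rw [norm_mul, norm_mul, norm_qexp_qi, norm_qexp_qj, one_mul, mul_one]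

lemma sqrtQ_inv (u : Hq) (hu : u * u = -1) {b : ℝ} (hb : b ≠ 0) :
    (sqrtQ u b)⁻¹ = (Real.sqrt |b|)⁻¹ • qexp u (-(Real.pi * Real.sign b / 4)) := by
  have hs : Real.sqrt |b| ≠ 0 := (Real.sqrt_pos.mpr (abs_pos.mpr hb)).ne'
  refine inv_eq_of_mul_eq_one_right ?_
  rw [sqrtQ, smul_mul_smul_comm, qexp_mul u hu, add_neg_cancel, qexp_zero,
    mul_inv_cancel₀ hs, one_smul]

theorem stmt13 (a1 b1 c1 d1 a2 b2 c2 d2 : ℝ)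
    (hA1 : a1 * d1 - b1 * c1 = 1) (hA2 : a2 * d2 - b2 * c2 = 1)
    (hb1 : b1 ≠ 0) (hb2 : b2 ≠ 0)
    (f : ℝ × ℝ → Hq) (hf : Integrable f)
    (h : ℝ × ℝ → Hq)
    (hh : ∀ x : ℝ × ℝ,
      h x = qexp qi (a1 * x.1 ^ 2 / (2 * b1)) * f x * qexp qj (a2 * x.2 ^ 2 / (2 * b2))) :
    ∀ ω : ℝ × ℝ,
      Ls a1 b1 d1 a2 b2 d2 f ω =
        (sqrtQ qi b1)⁻¹ * qexp qi (d1 * ω.1 ^ 2 / (2 * b1)) *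
          Fs h (ω.1 / b1, ω.2 / b2) *
          qexp qj (d2 * ω.2 ^ 2 / (2 * b2)) * (sqrtQ qj b2)⁻¹ := by
  rintro ⟨ω1, ω2⟩
  simp only
  set G1 : ℝ × ℝ → ℝ := fun x => -(ω1 / b1 * x.1) + a1 * x.1 ^ 2 / (2 * b1) with hG1
  set G2 : ℝ × ℝ → ℝ := fun x => a2 * x.2 ^ 2 / (2 * b2) + -(ω2 / b2 * x.2) with hG2
  set g : ℝ × ℝ → Hq := fun x => qexp qi (G1 x) * f x * qexp qj (G2 x) with hgdef
  have hg : Integrable g := integrable_sandwich hf (by fun_prop) (by fun_prop)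
  -- rewrite the quaternion Fourier transform of h
  have hFs : Fs h (ω1 / b1, ω2 / b2) = (1 / (2 * Real.pi)) • ∫ x : ℝ × ℝ, g x := by
    unfold Fs
    refine congrArg _ (integral_congr_ae (Filter.Eventually.of_forall fun x => ?_))
    beta_reduce
    simp only
    rw [hh x]
    simp only [hgdef, hG1, hG2, mul_assoc]
    rw [qexp_mul qj qj_sq, ← mul_assoc (qexp qi _) (qexp qi _), qexp_mul qi qi_sq,
      add_comm (a2 * x.2 ^ 2 / (2 * b2))]
  set Q1 : Hq := qexp qi (-(Real.pi * Real.sign b1 / 4) + d1 * ω1 ^ 2 / (2 * b1)) with hQ1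
  set Q2 : Hq := qexp qj (d2 * ω2 ^ 2 / (2 * b2) + -(Real.pi * Real.sign b2 / 4)) with hQ2
  have e1 : (sqrtQ qi b1)⁻¹ * qexp qi (d1 * ω1 ^ 2 / (2 * b1)) = (Real.sqrt |b1|)⁻¹ • Q1 := by
    rw [sqrtQ_inv qi qi_sq hb1, smul_mul_assoc, qexp_mul qi qi_sq, hQ1]
  have e2 : qexp qj (d2 * ω2 ^ 2 / (2 * b2)) * (sqrtQ qj b2)⁻¹ = (Real.sqrt |b2|)⁻¹ • Q2 := by
    rw [sqrtQ_inv qj qj_sq hb2, mul_smul_comm, qexp_mul qj qj_sq, hQ2]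
  rw [hFs, mul_assoc _ (qexp qj _), e2, e1]
  rw [smul_mul_smul_comm, smul_mul_smul_comm]
  rw [← integral_qmul_left Q1 hg, ← integral_qmul_right Q2 (hg.const_mul Q1),
    ← integral_smul]
  unfold Ls
  refine integral_congr_ae (Filter.Eventually.of_forall fun x => ?_)
  beta_reduce
  simp only
  unfold Kker
  rw [qexp_mul qi qi_sq, qexp_mul qj qj_sq, smul_mul_assoc, smul_mul_assoc,
    mul_smul_comm, smul_smul]
  simp only [hgdef, hQ1, hQ2, hG1, hG2, mul_assoc]
  rw [qexp_mul qj qj_sq, ← mul_assoc (qexp qi _) (qexp qi _), qexp_mul qi qi_sq]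
  have h2pi : (0:ℝ) ≤ 2 * Real.pi := by positivity
  have key : (1:ℝ) / (2 * Real.pi) = (Real.sqrt (2*Real.pi))⁻¹ * (Real.sqrt (2*Real.pi))⁻¹ := by
    rw [← mul_inv, Real.mul_self_sqrt h2pi, one_div]
  have hsc : ∀ b : ℝ, (Real.sqrt (2 * (Real.pi * |b|)))⁻¹
      = (Real.sqrt (2*Real.pi))⁻¹ * (Real.sqrt |b|)⁻¹ := fun b => by
    rw [← mul_assoc, Real.sqrt_mul h2pi, mul_inv]
  congr 1
  · rw [hsc, hsc, key]; ring
  · congr 2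
    · ring
    · congr 1
      ring
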